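/- Let 0 < t < 1, \ell \in \frac{1}{2}\mathbb{N}, i, j \in \{-\ell,\ldots,\ell\}, and let M(\ell,i) = t^{\ell-i} \sqrt{(1-t^{2(\ell+i+1)})/(1-t^{2(2\ell+2)})}. Then for the quantity \beta^+_+(\ell,i,j) with |\beta^+_+(\ell,i,j)| = t^{j-i-1} \cdot t^{\ell-j+1} \sqrt{(1-t^{2(\ell-j+1)})(1-t^{2(\ell+i+1)})/((1-t^{2(2\ell+1)})(1-t^{2(2\ell+2)}))}, one has \max_j |\beta^+_+(\ell,i,j)| = M(\ell,i), and (4\ell+3) \cdot M(\ell,i) \le t^{2\ell}(4\ell+3) when \ell + i = 0, while M(\ell,i) \le 1 always. -/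

import Mathlib

theorem stmt_10 (t ℓ i : ℝ) (h0 : 0 < t) (h1 : t < 1)
    (hℓ : ∃ n : ℕ, 2 * ℓ = n) (hi : ∃ a : ℕ, i = -ℓ + a) (hi' : i ≤ ℓ)
    (B : ℝ → ℝ) (M : ℝ)
    (hB : ∀ j : ℝ, B j = t ^ (j - i - 1) * t ^ (ℓ - j + 1) *
      Real.sqrt ((1 - t ^ (2*(ℓ - j + 1))) * (1 - t ^ (2*(ℓ + i + 1))) /
        ((1 - t ^ (2*(2*ℓ + 1))) * (1 - t ^ (2*(2*ℓ + 2))))))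
    (hM : M = t ^ (ℓ - i) * Real.sqrt ((1 - t ^ (2*(ℓ + i + 1))) / (1 - t ^ (2*(2*ℓ + 2))))) :
    (∀ j : ℝ, (∃ b : ℕ, j = -ℓ + b) → j ≤ ℓ → B j ≤ M) ∧
    B (-ℓ) = M ∧
    (ℓ + i = 0 → (4*ℓ + 3) * M ≤ t ^ (2*ℓ) * (4*ℓ + 3)) ∧
    M ≤ 1 := by
  obtain ⟨n, hn⟩ := hℓ
  obtain ⟨a, ha⟩ := hi
  have hℓ0 : 0 ≤ ℓ := by
    have : (0:ℝ) ≤ (n:ℝ) := Nat.cast_nonneg n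
    linarith
  have hiℓ : -ℓ ≤ i := by
    have : (0:ℝ) ≤ (a:ℝ) := Nat.cast_nonneg a
    linarith
  have hS : (0:ℝ) < 1 - t ^ (2*(2*ℓ+2)) := by
    have := Real.rpow_lt_one h0.le h1 (by linarith : (0:ℝ) < 2*(2*ℓ+2))
    linarith
  have hR : (0:ℝ) < 1 - t ^ (2*(2*ℓ+1)) := by
    have := Real.rpow_lt_one h0.le h1 (by linarith : (0:ℝ) < 2*(2*ℓ+1))
    linarith
  have hQ : (0:ℝ) ≤ 1 - t ^ (2*(ℓ+i+1)) := by
    have := Real.rpow_le_one h0.le h1.le (by linarith : (0:ℝ) ≤ 2*(ℓ+i+1))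
    linarith
  have hQS : (0:ℝ) ≤ (1 - t ^ (2*(ℓ+i+1))) / (1 - t ^ (2*(2*ℓ+2))) :=
    div_nonneg hQ hS.le
  -- first conjunct
  have main : ∀ j : ℝ, (∃ b : ℕ, j = -ℓ + b) → j ≤ ℓ → B j ≤ M := by
    intro j hj hjℓ
    obtain ⟨b, hb⟩ := hj
    have hjl : -ℓ ≤ j := by
      have : (0:ℝ) ≤ (b:ℝ) := Nat.cast_nonneg b
      linarith
    rw [hB, hM, ← Real.rpow_add h0, show j - i - 1 + (ℓ - j + 1) = ℓ - i by ring]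
    apply mul_le_mul_of_nonneg_left _ (Real.rpow_nonneg h0.le _)
    apply Real.sqrt_le_sqrt
    have hP : (0:ℝ) ≤ 1 - t ^ (2*(ℓ-j+1)) := by
      have := Real.rpow_le_one h0.le h1.le (by linarith : (0:ℝ) ≤ 2*(ℓ-j+1))
      linarith
    have hPR : 1 - t ^ (2*(ℓ-j+1)) ≤ 1 - t ^ (2*(2*ℓ+1)) := by
      have := Real.rpow_le_rpow_of_exponent_ge h0 h1.le
        (by linarith : 2*(ℓ-j+1) ≤ 2*(2*ℓ+1))
      linarith
    rw [div_le_div_iff₀ (by positivity) hS]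
    nlinarith [mul_le_mul_of_nonneg_left hPR (mul_nonneg hQ hS.le)]
  refine ⟨main, ?_, ?_, ?_⟩
  · -- B (-ℓ) = M
    rw [hB, hM, ← Real.rpow_add h0, show -ℓ - i - 1 + (ℓ - (-ℓ) + 1) = ℓ - i by ring]
    congr 1
    congr 1
    rw [show 2*(ℓ - (-ℓ) + 1) = 2*(2*ℓ+1) by ring]
    field_simp
  · intro h
    rw [hM, show ℓ - i = 2*ℓ by linarith]
    have hle : Real.sqrt ((1 - t ^ (2*(ℓ+i+1))) / (1 - t ^ (2*(2*ℓ+2)))) ≤ 1 := by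
      have hx : (1 - t ^ (2*(ℓ+i+1))) / (1 - t ^ (2*(2*ℓ+2))) ≤ 1 := by
        rw [div_le_one hS]
        have := Real.rpow_le_rpow_of_exponent_ge h0 h1.le
          (by linarith : 2*(ℓ+i+1) ≤ 2*(2*ℓ+2))
        linarith
      simpa using Real.sqrt_le_sqrt hx
    have ht : (0:ℝ) ≤ t ^ (2*ℓ) := Real.rpow_nonneg h0.le _
    nlinarith [mul_le_mul_of_nonneg_left hle (mul_nonneg (by linarith : (0:ℝ) ≤ 4*ℓ+3) ht),
      Real.sqrt_nonneg ((1 - t ^ (2*(ℓ+i+1))) / (1 - t ^ (2*(2*ℓ+2))))]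
  · rw [hM]
    have h1' : t ^ (ℓ - i) ≤ 1 := Real.rpow_le_one h0.le h1.le (by linarith)
    have hle : Real.sqrt ((1 - t ^ (2*(ℓ+i+1))) / (1 - t ^ (2*(2*ℓ+2)))) ≤ 1 := by
      have hx : (1 - t ^ (2*(ℓ+i+1))) / (1 - t ^ (2*(2*ℓ+2))) ≤ 1 := by
        rw [div_le_one hS]
        have := Real.rpow_le_rpow_of_exponent_ge h0 h1.le
          (by linarith : 2*(ℓ+i+1) ≤ 2*(2*ℓ+2))
        linarith
      simpa using Real.sqrt_le_sqrt hx
    nlinarith [mul_le_mul h1' hle (Real.sqrt_nonneg _) zero_le_one]
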